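/- In the difference-graph argument: if a baker profile s* maximizes Φ_t(x) = Σ_ℓ M_t(ℓ)·H_{B_x(ℓ)}, then for any maximal path (p_1, …, p_m) in the acyclic multigraph whose arcs record bakers moving from their location in s to their location in s*, it holds that (B_{s*}(p_1)+1)/M_t(p_1) ≥ B_{s*}(p_m)/M_t(p_m). -/

import Mathlib

open Finset

/-- Number of agents (bakers or millers) choosing location `ℓ`. -/
def cnt {A L : Type*} [Fintype A] [DecidableEq L] (f : A → L) (ℓ : L) : ℕ :=
  (Finset.univ.filter (fun a => f a = ℓ)).card

/-- Rosenthal potential `Φ_t(s) = Σ_ℓ M_t(ℓ) · H_{B_s(ℓ)}`, with `harmonic k` the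
`k`-th harmonic number. -/
def pot {L B M : Type*} [Fintype L] [Fintype B] [Fintype M] [DecidableEq L]
    (t : M → L) (s : B → L) : ℚ :=
  ∑ ℓ : L, (cnt t ℓ : ℚ) * harmonic (cnt s ℓ)

/-- The count of an injective function is the indicator of its range. -/
lemma cnt_inj {A L : Type*} [Fintype A] [DecidableEq L] (f : A → L)
    (hf : Function.Injective f) (ℓ : L) :
    cnt f ℓ = if ∃ a, f a = ℓ then 1 else 0 := by
  classical
  unfold cnt
  split
  · next h =>
    obtain ⟨a, ha⟩ := h
    rw [Finset.card_eq_one]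
    refine ⟨a, ?_⟩
    ext x
    simp only [Finset.mem_filter, Finset.mem_univ, true_and, Finset.mem_singleton]
    constructor
    · intro hx; exact hf (hx.trans ha.symm)
    · rintro rfl; exact ha
  · next h =>
    rw [Finset.card_eq_zero, Finset.filter_eq_empty_iff]
    intro x _ hx
    exact h ⟨x, hx⟩

/-- difference-graph argument: if `s*` maximizes `Φ_t` among feasible
baker profiles, then along any maximal path `p_0, …, p_m` of the acyclic difference
multigraph (arcs record bakers moving from their location in `s` to their location
in `s*`), one has `(B_{s*}(p_0)+1)/M_t(p_0) ≥ B_{s*}(p_m)/M_t(p_m)`. -/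
theorem difference_path_inequality {L B M : Type*} [Fintype L] [Fintype B] [Fintype M]
    [DecidableEq L]
    (feas : B → Finset L) (t : M → L) (s sstar : B → L)
    (hs : ∀ b, s b ∈ feas b) (hstar : ∀ b, sstar b ∈ feas b)
    (hmax : ∀ x : B → L, (∀ b, x b ∈ feas b) → pot t x ≤ pot t sstar)
    (m : ℕ) (p : Fin (m + 1) → L) (hinj : Function.Injective p)
    (hmill : ∀ i, 0 < cnt t (p i))
    (harc : ∀ i : Fin m, ∃ b, s b = p i.castSucc ∧ sstar b = p i.succ)
    (hstartmax : ∀ b, sstar b = p 0 → s b = p 0)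
    (hendmax : ∀ b, s b = p (Fin.last m) → sstar b = p (Fin.last m)) :
    (cnt sstar (p (Fin.last m)) : ℚ) / (cnt t (p (Fin.last m)) : ℚ) ≤
      ((cnt sstar (p 0) : ℚ) + 1) / (cnt t (p 0) : ℚ) := by
  classical
  have hM0 : (0:ℚ) < (cnt t (p 0) : ℚ) := by exact_mod_cast hmill 0
  have hMl : (0:ℚ) < (cnt t (p (Fin.last m)) : ℚ) := by exact_mod_cast hmill (Fin.last m)
  rcases Nat.eq_zero_or_pos m with hm | hm
  · subst hm
    have h0 : (Fin.last 0 : Fin 1) = 0 := rfl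
    rw [h0, div_le_div_iff₀ hM0 hM0]
    have hB : (0:ℚ) ≤ (cnt sstar (p 0) : ℚ) := by positivity
    nlinarith
  · -- choose one baker per arc
    choose bb hb1 hb2 using harc
    have hbbinj : Function.Injective bb := by
      intro i j hij
      have : p i.succ = p j.succ := by rw [← hb2 i, ← hb2 j, hij]
      exact Fin.succ_injective m (hinj this)
    set S : Finset B := Finset.univ.image bb with hS
    set x : B → L := fun a => if a ∈ S then s a else sstar a with hx
    have hfeas : ∀ a, x a ∈ feas a := by
      intro a; by_cases h : a ∈ S <;> simp [hx, h, hs, hstar]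
    -- counting functions over the path
    have hpcs : Function.Injective (fun i : Fin m => p i.castSucc) :=
      fun i j h => Fin.castSucc_injective m (hinj h)
    have hpsu : Function.Injective (fun i : Fin m => p i.succ) :=
      fun i j h => Fin.succ_injective m (hinj h)
    -- decomposition of counts
    have hsplit : ∀ (f : B → L) (ℓ : L),
        cnt f ℓ = (S.filter (fun a => f a = ℓ)).card
          + ((Finset.univ \ S).filter (fun a => f a = ℓ)).card := by
      intro f ℓ
      unfold cnt
      rw [← Finset.card_union_of_disjoint, ← Finset.filter_union,
        Finset.union_sdiff_of_subset (Finset.subset_univ S)]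
      exact Finset.disjoint_filter_filter (Finset.disjoint_sdiff)
    have hSx : ∀ ℓ, (S.filter (fun a => x a = ℓ)).card = cnt (fun i : Fin m => p i.castSucc) ℓ := by
      intro ℓ
      have h1 : S.filter (fun a => x a = ℓ) = S.filter (fun a => s a = ℓ) := by
        apply Finset.filter_congr
        intro a ha
        simp [hx, ha]
      rw [h1, hS, Finset.filter_image, Finset.card_image_of_injective _ hbbinj]
      unfold cnt
      congr 1
      apply Finset.filter_congr
      intro i _
      simp [hb1 i]
    have hSstar : ∀ ℓ, (S.filter (fun a => sstar a = ℓ)).card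
        = cnt (fun i : Fin m => p i.succ) ℓ := by
      intro ℓ
      rw [hS, Finset.filter_image, Finset.card_image_of_injective _ hbbinj]
      unfold cnt
      congr 1
      apply Finset.filter_congr
      intro i _
      simp [hb2 i]
    have hRx : ∀ ℓ, ((Finset.univ \ S).filter (fun a => x a = ℓ)).card
        = ((Finset.univ \ S).filter (fun a => sstar a = ℓ)).card := by
      intro ℓ
      congr 1
      apply Finset.filter_congr
      intro a ha
      simp only [Finset.mem_sdiff] at ha
      simp [hx, ha.2]
    have hcx : ∀ ℓ, cnt x ℓ = cnt (fun i : Fin m => p i.castSucc) ℓ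
        + ((Finset.univ \ S).filter (fun a => sstar a = ℓ)).card := by
      intro ℓ; rw [hsplit x ℓ, hSx, hRx]
    have hcs : ∀ ℓ, cnt sstar ℓ = cnt (fun i : Fin m => p i.succ) ℓ
        + ((Finset.univ \ S).filter (fun a => sstar a = ℓ)).card := by
      intro ℓ; rw [hsplit sstar ℓ, hSstar]
    -- evaluate path counts
    have i0 : Fin m := ⟨0, hm⟩
    have hlastne0 : (Fin.last m : Fin (m+1)) ≠ 0 := by
      intro h
      have := Fin.ext_iff.mp h
      simp [Fin.last] at this
      try omega
    have hp0ne : p (Fin.last m) ≠ p 0 := fun h => hlastne0 (hinj h)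
    -- counts at p 0
    have hA0 : cnt (fun i : Fin m => p i.castSucc) (p 0) = 1 := by
      rw [cnt_inj _ hpcs, if_pos]
      exact ⟨⟨0, hm⟩, by congr 1⟩
    have hC0 : cnt (fun i : Fin m => p i.succ) (p 0) = 0 := by
      rw [cnt_inj _ hpsu, if_neg]
      rintro ⟨i, hi⟩
      exact Fin.succ_ne_zero i (hinj hi)
    -- counts at p (last m)
    have hAl : cnt (fun i : Fin m => p i.castSucc) (p (Fin.last m)) = 0 := by
      rw [cnt_inj _ hpcs, if_neg]
      rintro ⟨i, hi⟩
      exact (Fin.castSucc_lt_last i).ne (hinj hi)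
    have hCl : cnt (fun i : Fin m => p i.succ) (p (Fin.last m)) = 1 := by
      rw [cnt_inj _ hpsu, if_pos]
      refine ⟨⟨m - 1, by omega⟩, ?_⟩
      congr 1
      apply Fin.ext
      simp [Fin.succ, Fin.last]
      omega
    -- counts agree elsewhere
    have hmid : ∀ ℓ, ℓ ≠ p 0 → ℓ ≠ p (Fin.last m) →
        cnt (fun i : Fin m => p i.castSucc) ℓ = cnt (fun i : Fin m => p i.succ) ℓ := by
      intro ℓ h0 hl
      rw [cnt_inj _ hpcs, cnt_inj _ hpsu]
      congr 1
      apply propext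
      constructor
      · rintro ⟨i, hi⟩
        have hne : i.castSucc ≠ 0 := fun h => h0 (by rw [← hi, h])
        obtain ⟨j, hj⟩ := Fin.eq_succ_of_ne_zero hne
        exact ⟨j, by rw [← hj, hi]⟩
      · rintro ⟨i, hi⟩
        have hne : i.succ ≠ Fin.last m := fun h => hl (by rw [← hi, h])
        obtain ⟨j, hj⟩ := Fin.exists_castSucc_eq.mpr hne
        exact ⟨j, by rw [hj, hi]⟩
    -- the key count relations
    have hx0 : cnt x (p 0) = cnt sstar (p 0) + 1 := by
      rw [hcx, hcs, hA0, hC0]; ring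
    have hxl : cnt sstar (p (Fin.last m)) = cnt x (p (Fin.last m)) + 1 := by
      rw [hcx, hcs, hAl, hCl]; ring
    have hxmid : ∀ ℓ, ℓ ≠ p 0 → ℓ ≠ p (Fin.last m) → cnt x ℓ = cnt sstar ℓ := by
      intro ℓ h0 hl; rw [hcx, hcs, hmid ℓ h0 hl]
    -- potential difference
    have hpot := hmax x hfeas
    have hdiff : pot t x - pot t sstar
        = (cnt t (p 0) : ℚ) / ((cnt sstar (p 0) : ℚ) + 1)
          - (cnt t (p (Fin.last m)) : ℚ) / (cnt sstar (p (Fin.last m)) : ℚ) := by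
      unfold pot
      rw [← Finset.sum_sub_distrib]
      have hvanish : ∀ ℓ ∈ (Finset.univ : Finset L),
          ℓ ∉ ({p 0, p (Fin.last m)} : Finset L) →
          (cnt t ℓ : ℚ) * harmonic (cnt x ℓ) - (cnt t ℓ : ℚ) * harmonic (cnt sstar ℓ) = 0 := by
        intro ℓ _ hℓ
        simp only [Finset.mem_insert, Finset.mem_singleton, not_or] at hℓ
        rw [hxmid ℓ hℓ.1 hℓ.2]; ring
      rw [← Finset.sum_subset (Finset.subset_univ {p 0, p (Fin.last m)}) hvanish,
        Finset.sum_pair (Ne.symm hp0ne)]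
      rw [hx0, hxl, harmonic_succ, harmonic_succ]
      push_cast
      ring
    have hkey : (cnt t (p 0) : ℚ) / ((cnt sstar (p 0) : ℚ) + 1)
        ≤ (cnt t (p (Fin.last m)) : ℚ) / (cnt sstar (p (Fin.last m)) : ℚ) := by
      linarith [hdiff, hpot]
    have hBl : (0:ℚ) < (cnt sstar (p (Fin.last m)) : ℚ) := by
      rw [hxl]; push_cast; positivity
    have hB0 : (0:ℚ) < (cnt sstar (p 0) : ℚ) + 1 := by positivity
    rw [div_le_div_iff₀ hB0 hBl] at hkey
    rw [div_le_div_iff₀ hMl hM0]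
    nlinarith
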